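/- The curve C₇ = {F₇ = 0} ⊂ P² (F₇ as in the Appendix) has multiplicity exactly 3 at p₀ = [0:0:1] and at p₅ = [3:2i:1], and multiplicity exactly 2 at each of p₁ = [-2:1:1], p₂ = [2:1:1], p₃ = [-1:2:1], p₄ = [1:2:1]. -/
import Mathlib


open MvPolynomial

/-- The septic F₇ of the Appendix in the affine chart z = 1, over ℚ(i) ⊆ ℂ. -/
noncomputable def f₇ : MvPolynomial (Fin 2) ℂ :=
  let x : MvPolynomial (Fin 2) ℂ := X 0
  let y : MvPolynomial (Fin 2) ℂ := X 1
  let i : ℂ := Complex.I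
  12*x^7 + C (8*i+420)*x^6*y + 1611*x^5*y^2 + C (174*i+3060)*x^4*y^3 +
  4086*x^3*y^4 + C (924*i+3360)*x^2*y^5 + 987*x*y^6 + C (-242*i+720)*y^7 -
  560*x^6 - 4320*x^5*y + C (-480*i-13580)*x^4*y^2 - 23940*x^3*y^3 +
  C (-5160*i-24980)*x^2*y^4 - 10620*x*y^5 + C (1320*i-6960)*y^6 +
  2760*x^5 + C (240*i+16200)*x^4*y + 44970*x^3*y^2 + C (9780*i+63900)*x^2*y^3 +
  39210*x*y^4 + C (-2460*i+25200)*y^5 - 4400*x^4 - 28800*x^3*y +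
  C (-7200*i-62300)*x^2*y^2 - 60300*x*y^3 + C (1800*i-40400)*y^4 +
  2700*x^3 + C (1800*i+16500)*x^2*y + 33075*x*y^2 + C (-450*i+24000)*y^3

/-- Recentering of an affine plane curve at the point (a,b). -/
noncomputable def shiftAt (a b : ℂ) (f : MvPolynomial (Fin 2) ℂ) : MvPolynomial (Fin 2) ℂ :=
  aeval ![X 0 + C a, X 1 + C b] f

/-- Multiplicity of the affine curve f = 0 at the origin is exactly m. -/
def multIs (f : MvPolynomial (Fin 2) ℂ) (m : ℕ) : Prop :=
  (∀ k < m, homogeneousComponent k f = 0) ∧ homogeneousComponent m f ≠ 0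

lemma eval_shiftAt (a b : ℂ) (f : MvPolynomial (Fin 2) ℂ) (x : Fin 2 → ℂ) :
    eval x (shiftAt a b f) = eval ![x 0 + a, x 1 + b] f := by
  unfold shiftAt
  induction f using MvPolynomial.induction_on with
  | C c => simp
  | add p q hp hq =>
      simp only [map_add, aeval_eq_bind₁] at hp hq ⊢
      rw [hp, hq]
  | mul_X p i hp =>
      simp only [map_mul, aeval_eq_bind₁, bind₁_X_right] at hp ⊢
      rw [hp]
      congr 1
      fin_cases i <;> simp

noncomputable def P0G3 : MvPolynomial (Fin 2) ℂ :=
  C ((24000) + (-450) * Complex.I) * X 0 ^ 0 * X 1 ^ 3 + C (33075 : ℂ) * X 0 ^ 1 * X 1 ^ 2 + C ((16500) + (1800) * Complex.I) * X 0 ^ 2 * X 1 ^ 1 + C (2700 : ℂ) * X 0 ^ 3 * X 1 ^ 0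

lemma P0G3hom : (P0G3).IsHomogeneous 3 := by
  unfold P0G3
  repeat' apply MvPolynomial.IsHomogeneous.add
  all_goals exact ((isHomogeneous_C _ _).mul ((isHomogeneous_X _ _).pow _)).mul ((isHomogeneous_X _ _).pow _)

noncomputable def P0G4 : MvPolynomial (Fin 2) ℂ :=
  C ((-40400) + (1800) * Complex.I) * X 0 ^ 0 * X 1 ^ 4 + C (-60300 : ℂ) * X 0 ^ 1 * X 1 ^ 3 + C ((-62300) + (-7200) * Complex.I) * X 0 ^ 2 * X 1 ^ 2 + C (-28800 : ℂ) * X 0 ^ 3 * X 1 ^ 1 + C (-4400 : ℂ) * X 0 ^ 4 * X 1 ^ 0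

lemma P0G4hom : (P0G4).IsHomogeneous 4 := by
  unfold P0G4
  repeat' apply MvPolynomial.IsHomogeneous.add
  all_goals exact ((isHomogeneous_C _ _).mul ((isHomogeneous_X _ _).pow _)).mul ((isHomogeneous_X _ _).pow _)

noncomputable def P0G5 : MvPolynomial (Fin 2) ℂ :=
  C ((25200) + (-2460) * Complex.I) * X 0 ^ 0 * X 1 ^ 5 + C (39210 : ℂ) * X 0 ^ 1 * X 1 ^ 4 + C ((63900) + (9780) * Complex.I) * X 0 ^ 2 * X 1 ^ 3 + C (44970 : ℂ) * X 0 ^ 3 * X 1 ^ 2 + C ((16200) + (240) * Complex.I) * X 0 ^ 4 * X 1 ^ 1 + C (2760 : ℂ) * X 0 ^ 5 * X 1 ^ 0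

lemma P0G5hom : (P0G5).IsHomogeneous 5 := by
  unfold P0G5
  repeat' apply MvPolynomial.IsHomogeneous.add
  all_goals exact ((isHomogeneous_C _ _).mul ((isHomogeneous_X _ _).pow _)).mul ((isHomogeneous_X _ _).pow _)

noncomputable def P0G6 : MvPolynomial (Fin 2) ℂ :=
  C ((-6960) + (1320) * Complex.I) * X 0 ^ 0 * X 1 ^ 6 + C (-10620 : ℂ) * X 0 ^ 1 * X 1 ^ 5 + C ((-24980) + (-5160) * Complex.I) * X 0 ^ 2 * X 1 ^ 4 + C (-23940 : ℂ) * X 0 ^ 3 * X 1 ^ 3 + C ((-13580) + (-480) * Complex.I) * X 0 ^ 4 * X 1 ^ 2 + C (-4320 : ℂ) * X 0 ^ 5 * X 1 ^ 1 + C (-560 : ℂ) * X 0 ^ 6 * X 1 ^ 0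

lemma P0G6hom : (P0G6).IsHomogeneous 6 := by
  unfold P0G6
  repeat' apply MvPolynomial.IsHomogeneous.add
  all_goals exact ((isHomogeneous_C _ _).mul ((isHomogeneous_X _ _).pow _)).mul ((isHomogeneous_X _ _).pow _)

noncomputable def P0G7 : MvPolynomial (Fin 2) ℂ :=
  C ((720) + (-242) * Complex.I) * X 0 ^ 0 * X 1 ^ 7 + C (987 : ℂ) * X 0 ^ 1 * X 1 ^ 6 + C ((3360) + (924) * Complex.I) * X 0 ^ 2 * X 1 ^ 5 + C (4086 : ℂ) * X 0 ^ 3 * X 1 ^ 4 + C ((3060) + (174) * Complex.I) * X 0 ^ 4 * X 1 ^ 3 + C (1611 : ℂ) * X 0 ^ 5 * X 1 ^ 2 + C ((420) + (8) * Complex.I) * X 0 ^ 6 * X 1 ^ 1 + C (12 : ℂ) * X 0 ^ 7 * X 1 ^ 0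

lemma P0G7hom : (P0G7).IsHomogeneous 7 := by
  unfold P0G7
  repeat' apply MvPolynomial.IsHomogeneous.add
  all_goals exact ((isHomogeneous_C _ _).mul ((isHomogeneous_X _ _).pow _)).mul ((isHomogeneous_X _ _).pow _)

lemma P0eq : shiftAt (0 : ℂ) (0 : ℂ) f₇ = P0G3 + P0G4 + P0G5 + P0G6 + P0G7 := by
  apply MvPolynomial.funext
  intro x
  rw [eval_shiftAt]
  unfold f₇ P0G3 P0G4 P0G5 P0G6 P0G7
  simp only [map_add, map_sub, map_mul, map_pow, map_neg, map_ofNat, map_one, eval_X, eval_C,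
    Matrix.cons_val_zero, Matrix.cons_val_one, Matrix.head_cons, Fin.isValue]
  ring

lemma P0ne : P0G3 ≠ 0 := by
  intro h
  have h2 := congrArg (eval ![(1 : ℂ), (0 : ℂ)]) h
  simp only [P0G3, map_add, map_mul, map_pow, eval_C, eval_X, map_ofNat, eval_zero,
    Matrix.cons_val_zero, Matrix.cons_val_one, Matrix.head_cons] at h2
  norm_num [Complex.ext_iff] at h2

noncomputable def P5G3 : MvPolynomial (Fin 2) ℂ :=
  C ((48000) + (73600) * Complex.I) * X 0 ^ 0 * X 1 ^ 3 + C ((283200) + (-72000) * Complex.I) * X 0 ^ 1 * X 1 ^ 2 + C ((48000) + (-332800) * Complex.I) * X 0 ^ 2 * X 1 ^ 1 + C ((-110400) + (-72000) * Complex.I) * X 0 ^ 3 * X 1 ^ 0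

lemma P5G3hom : (P5G3).IsHomogeneous 3 := by
  unfold P5G3
  repeat' apply MvPolynomial.IsHomogeneous.add
  all_goals exact ((isHomogeneous_C _ _).mul ((isHomogeneous_X _ _).pow _)).mul ((isHomogeneous_X _ _).pow _)

noncomputable def P5G4 : MvPolynomial (Fin 2) ℂ :=
  C ((76352) + (-89640) * Complex.I) * X 0 ^ 0 * X 1 ^ 4 + C ((-126720) + (-304992) * Complex.I) * X 0 ^ 1 * X 1 ^ 3 + C ((-280112) + (-96000) * Complex.I) * X 0 ^ 2 * X 1 ^ 2 + C ((-126720) + (-40608) * Complex.I) * X 0 ^ 3 * X 1 ^ 1 + C ((-70848) + (-6360) * Complex.I) * X 0 ^ 4 * X 1 ^ 0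

lemma P5G4hom : (P5G4).IsHomogeneous 4 := by
  unfold P5G4
  repeat' apply MvPolynomial.IsHomogeneous.add
  all_goals exact ((isHomogeneous_C _ _).mul ((isHomogeneous_X _ _).pow _)).mul ((isHomogeneous_X _ _).pow _)

noncomputable def P5G5 : MvPolynomial (Fin 2) ℂ :=
  C ((-52740) + (-21804) * Complex.I) * X 0 ^ 0 * X 1 ^ 5 + C ((-115008) + (64440) * Complex.I) * X 0 ^ 1 * X 1 ^ 4 + C ((-79440) + (76568) * Complex.I) * X 0 ^ 2 * X 1 ^ 3 + C ((-83592) + (70920) * Complex.I) * X 0 ^ 3 * X 1 ^ 2 + C ((-26700) + (41572) * Complex.I) * X 0 ^ 4 * X 1 ^ 1 + C ((-11784) + (6480) * Complex.I) * X 0 ^ 5 * X 1 ^ 0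

lemma P5G5hom : (P5G5).IsHomogeneous 5 := by
  unfold P5G5
  repeat' apply MvPolynomial.IsHomogeneous.add
  all_goals exact ((isHomogeneous_C _ _).mul ((isHomogeneous_X _ _).pow _)).mul ((isHomogeneous_X _ _).pow _)

noncomputable def P5G6 : MvPolynomial (Fin 2) ℂ :=
  C ((-611) + (11400) * Complex.I) * X 0 ^ 0 * X 1 ^ 6 + C ((9540) + (17388) * Complex.I) * X 0 ^ 1 * X 1 ^ 5 + C ((2554) + (28440) * Complex.I) * X 0 ^ 2 * X 1 ^ 4 + C ((12780) + (34776) * Complex.I) * X 0 ^ 3 * X 1 ^ 3 + C ((9541) + (17880) * Complex.I) * X 0 ^ 4 * X 1 ^ 2 + C ((3240) + (6588) * Complex.I) * X 0 ^ 5 * X 1 ^ 1 + C ((-324) + (840) * Complex.I) * X 0 ^ 6 * X 1 ^ 0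

lemma P5G6hom : (P5G6).IsHomogeneous 6 := by
  unfold P5G6
  repeat' apply MvPolynomial.IsHomogeneous.add
  all_goals exact ((isHomogeneous_C _ _).mul ((isHomogeneous_X _ _).pow _)).mul ((isHomogeneous_X _ _).pow _)

noncomputable def P5G7 : MvPolynomial (Fin 2) ℂ :=
  C ((720) + (-242) * Complex.I) * X 0 ^ 0 * X 1 ^ 7 + C (987 : ℂ) * X 0 ^ 1 * X 1 ^ 6 + C ((3360) + (924) * Complex.I) * X 0 ^ 2 * X 1 ^ 5 + C (4086 : ℂ) * X 0 ^ 3 * X 1 ^ 4 + C ((3060) + (174) * Complex.I) * X 0 ^ 4 * X 1 ^ 3 + C (1611 : ℂ) * X 0 ^ 5 * X 1 ^ 2 + C ((420) + (8) * Complex.I) * X 0 ^ 6 * X 1 ^ 1 + C (12 : ℂ) * X 0 ^ 7 * X 1 ^ 0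

lemma P5G7hom : (P5G7).IsHomogeneous 7 := by
  unfold P5G7
  repeat' apply MvPolynomial.IsHomogeneous.add
  all_goals exact ((isHomogeneous_C _ _).mul ((isHomogeneous_X _ _).pow _)).mul ((isHomogeneous_X _ _).pow _)

lemma P5eq : shiftAt (3 : ℂ) (2 * Complex.I) f₇ = P5G3 + P5G4 + P5G5 + P5G6 + P5G7 := by
  apply MvPolynomial.funext
  intro x
  rw [eval_shiftAt]
  unfold f₇ P5G3 P5G4 P5G5 P5G6 P5G7
  simp only [map_add, map_sub, map_mul, map_pow, map_neg, map_ofNat, map_one, eval_X, eval_C,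
    Matrix.cons_val_zero, Matrix.cons_val_one, Matrix.head_cons, Fin.isValue]
  linear_combination ((5184 : ℂ) + (-120960 : ℂ) * Complex.I ^ 1 + (254592 : ℂ) * Complex.I ^ 2 + (-136320 : ℂ) * Complex.I ^ 3 + (-37568 : ℂ) * Complex.I ^ 4 + (176640 : ℂ) * Complex.I ^ 5 + (-30976 : ℂ) * Complex.I ^ 6 + (-60480 : ℂ) * x 1 ^ 1 + (218304 : ℂ) * x 1 ^ 1 * Complex.I ^ 1 + (-118080 : ℂ) * x 1 ^ 1 * Complex.I ^ 2 + (-190912 : ℂ) * x 1 ^ 1 * Complex.I ^ 3 + (576000 : ℂ) * x 1 ^ 1 * Complex.I ^ 4 + (-108416 : ℂ) * x 1 ^ 1 * Complex.I ^ 5 + (44208 : ℂ) * x 1 ^ 2 + (14400 : ℂ) * x 1 ^ 2 * Complex.I ^ 1 + (-328656 : ℂ) * x 1 ^ 2 * Complex.I ^ 2 + (800640 : ℂ) * x 1 ^ 2 * Complex.I ^ 3 + (-162624 : ℂ) * x 1 ^ 2 * Complex.I ^ 4 + (-28320 : ℂ) * x 1 ^ 3 + (-270080 : ℂ) * x 1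 ^ 3 * Complex.I ^ 1 + (614400 : ℂ) * x 1 ^ 3 * Complex.I ^ 2 + (-135520 : ℂ) * x 1 ^ 3 * Complex.I ^ 3 + (-113620 : ℂ) * x 1 ^ 4 + (280800 : ℂ) * x 1 ^ 4 * Complex.I ^ 1 + (-67760 : ℂ) * x 1 ^ 4 * Complex.I ^ 2 + (76320 : ℂ) * x 1 ^ 5 + (-20328 : ℂ) * x 1 ^ 5 * Complex.I ^ 1 + (-3388 : ℂ) * x 1 ^ 6 + (-39744 : ℂ) * x 0 ^ 1 + (-132480 : ℂ) * x 0 ^ 1 * Complex.I ^ 1 + (373632 : ℂ) * x 0 ^ 1 * Complex.I ^ 2 + (-190080 : ℂ) * x 0 ^ 1 * Complex.I ^ 3 + (240576 : ℂ) * x 0 ^ 1 * Complex.I ^ 4 + (-66240 : ℂ) * x 0 ^ 1 * x 1 ^ 1 + (285504 : ℂ) * x 0 ^ 1 * x 1 ^ 1 * Complex.I ^ 1 + (-227520 : ℂ) * x 0 ^ 1 * x 1 ^ 1 * Complex.I ^ 2 + (633024 : ℂ) * x 0 ^ 1 * x 1 ^ 1 * Complex.I ^ 3 + (-223920 : ℂ)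 * x 0 ^ 1 * x 1 ^ 2 + (20160 : ℂ) * x 0 ^ 1 * x 1 ^ 2 * Complex.I ^ 1 + (680400 : ℂ) * x 0 ^ 1 * x 1 ^ 2 * Complex.I ^ 2 + (133920 : ℂ) * x 0 ^ 1 * x 1 ^ 3 + (379680 : ℂ) * x 0 ^ 1 * x 1 ^ 3 * Complex.I ^ 1 + (114660 : ℂ) * x 0 ^ 1 * x 1 ^ 4 + (-87264 : ℂ) * x 0 ^ 2 + (-48000 : ℂ) * x 0 ^ 2 * Complex.I ^ 1 + (312544 : ℂ) * x 0 ^ 2 * Complex.I ^ 2 + (24960 : ℂ) * x 0 ^ 2 * Complex.I ^ 3 + (29568 : ℂ) * x 0 ^ 2 * Complex.I ^ 4 + (-72000 : ℂ) * x 0 ^ 2 * x 1 ^ 1 + (533600 : ℂ) * x 0 ^ 2 * x 1 ^ 1 * Complex.I ^ 1 + (103680 : ℂ) * x 0 ^ 2 * x 1 ^ 1 * Complex.I ^ 2 + (73920 : ℂ) * x 0 ^ 2 * x 1 ^ 1 * Complex.I ^ 3 + (324192 : ℂ) * x 0 ^ 2 * x 1 ^ 2 + (144960 : ℂ) * x 0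 ^ 2 * x 1 ^ 2 * Complex.I ^ 1 + (73920 : ℂ) * x 0 ^ 2 * x 1 ^ 2 * Complex.I ^ 2 + (93120 : ℂ) * x 0 ^ 2 * x 1 ^ 3 + (36960 : ℂ) * x 0 ^ 2 * x 1 ^ 3 * Complex.I ^ 1 + (9240 : ℂ) * x 0 ^ 2 * x 1 ^ 4 + (40320 : ℂ) * x 0 ^ 3 + (79200 : ℂ) * x 0 ^ 3 * Complex.I ^ 1 + (82080 : ℂ) * x 0 ^ 3 * Complex.I ^ 2 + (130320 : ℂ) * x 0 ^ 3 * x 1 ^ 1 + (155808 : ℂ) * x 0 ^ 3 * x 1 ^ 1 * Complex.I ^ 1 + (110592 : ℂ) * x 0 ^ 3 * x 1 ^ 2 + (43588 : ℂ) * x 0 ^ 4 + (22560 : ℂ) * x 0 ^ 4 * Complex.I ^ 1 + (1392 : ℂ) * x 0 ^ 4 * Complex.I ^ 2 + (34800 : ℂ) * x 0 ^ 4 * x 1 ^ 1 + (2088 : ℂ) * x 0 ^ 4 * x 1 ^ 1 * Complex.I ^ 1 + (1044 : ℂ) * x 0 ^ 4 * x 1 ^ 2 + (6732 : ℂ) *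 x 0 ^ 5 + (16 : ℂ) * x 0 ^ 6) * Complex.I_sq

lemma P5ne : P5G3 ≠ 0 := by
  intro h
  have h2 := congrArg (eval ![(1 : ℂ), (0 : ℂ)]) h
  simp only [P5G3, map_add, map_mul, map_pow, eval_C, eval_X, map_ofNat, eval_zero,
    Matrix.cons_val_zero, Matrix.cons_val_one, Matrix.head_cons] at h2
  norm_num [Complex.ext_iff] at h2

noncomputable def P1G2 : MvPolynomial (Fin 2) ℂ :=
  C ((-50560) + (1920) * Complex.I) * X 0 ^ 0 * X 1 ^ 2 + C ((-50560) + (1920) * Complex.I) * X 0 ^ 1 * X 1 ^ 1 + C ((-12640) + (480) * Complex.I) * X 0 ^ 2 * X 1 ^ 0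

lemma P1G2hom : (P1G2).IsHomogeneous 2 := by
  unfold P1G2
  repeat' apply MvPolynomial.IsHomogeneous.add
  all_goals exact ((isHomogeneous_C _ _).mul ((isHomogeneous_X _ _).pow _)).mul ((isHomogeneous_X _ _).pow _)

noncomputable def P1G3 : MvPolynomial (Fin 2) ℂ :=
  C ((80288) + (-3616) * Complex.I) * X 0 ^ 0 * X 1 ^ 3 + C ((185232) + (-3024) * Complex.I) * X 0 ^ 1 * X 1 ^ 2 + C ((112416) + (-2112) * Complex.I) * X 0 ^ 2 * X 1 ^ 1 + C ((19936) + (-752) * Complex.I) * X 0 ^ 3 * X 1 ^ 0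

lemma P1G3hom : (P1G3).IsHomogeneous 3 := by
  unfold P1G3
  repeat' apply MvPolynomial.IsHomogeneous.add
  all_goals exact ((isHomogeneous_C _ _).mul ((isHomogeneous_X _ _).pow _)).mul ((isHomogeneous_X _ _).pow _)

noncomputable def P1G4 : MvPolynomial (Fin 2) ℂ :=
  C ((-60838) + (-1330) * Complex.I) * X 0 ^ 0 * X 1 ^ 4 + C ((-169312) + (912) * Complex.I) * X 0 ^ 1 * X 1 ^ 3 + C ((-207356) + (1428) * Complex.I) * X 0 ^ 2 * X 1 ^ 2 + C ((-91216) + (304) * Complex.I) * X 0 ^ 3 * X 1 ^ 1 + C ((-10990) + (414) * Complex.I) * X 0 ^ 4 * X 1 ^ 0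

lemma P1G4hom : (P1G4).IsHomogeneous 4 := by
  unfold P1G4
  repeat' apply MvPolynomial.IsHomogeneous.add
  all_goals exact ((isHomogeneous_C _ _).mul ((isHomogeneous_X _ _).pow _)).mul ((isHomogeneous_X _ _).pow _)

noncomputable def P1G5 : MvPolynomial (Fin 2) ℂ :=
  C ((21396) + (4074) * Complex.I) * X 0 ^ 0 * X 1 ^ 5 + C ((82667) + (2160) * Complex.I) * X 0 ^ 1 * X 1 ^ 4 + C ((116596) + (2556) * Complex.I) * X 0 ^ 2 * X 1 ^ 3 + C ((97306) + (-336) * Complex.I) * X 0 ^ 3 * X 1 ^ 2 + C ((34400) + (282) * Complex.I) * X 0 ^ 4 * X 1 ^ 1 + C ((2739) + (-96) * Complex.I) * X 0 ^ 5 * X 1 ^ 0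

lemma P1G5hom : (P1G5).IsHomogeneous 5 := by
  unfold P1G5
  repeat' apply MvPolynomial.IsHomogeneous.add
  all_goals exact ((isHomogeneous_C _ _).mul ((isHomogeneous_X _ _).pow _)).mul ((isHomogeneous_X _ _).pow _)

noncomputable def P1G6 : MvPolynomial (Fin 2) ℂ :=
  C ((-3894) + (-374) * Complex.I) * X 0 ^ 0 * X 1 ^ 6 + C ((-18138) + (-3696) * Complex.I) * X 0 ^ 1 * X 1 ^ 5 + C ((-32696) + (-540) * Complex.I) * X 0 ^ 2 * X 1 ^ 4 + C ((-32076) + (-1392) * Complex.I) * X 0 ^ 3 * X 1 ^ 3 + C ((-20510) + (42) * Complex.I) * X 0 ^ 4 * X 1 ^ 2 + C ((-6138) + (-96) * Complex.I) * X 0 ^ 5 * X 1 ^ 1 + C ((-308) + (8) * Complex.I) * X 0 ^ 6 * X 1 ^ 0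

lemma P1G6hom : (P1G6).IsHomogeneous 6 := by
  unfold P1G6
  repeat' apply MvPolynomial.IsHomogeneous.add
  all_goals exact ((isHomogeneous_C _ _).mul ((isHomogeneous_X _ _).pow _)).mul ((isHomogeneous_X _ _).pow _)

noncomputable def P1G7 : MvPolynomial (Fin 2) ℂ :=
  C ((720) + (-242) * Complex.I) * X 0 ^ 0 * X 1 ^ 7 + C (987 : ℂ) * X 0 ^ 1 * X 1 ^ 6 + C ((3360) + (924) * Complex.I) * X 0 ^ 2 * X 1 ^ 5 + C (4086 : ℂ) * X 0 ^ 3 * X 1 ^ 4 + C ((3060) + (174) * Complex.I) * X 0 ^ 4 * X 1 ^ 3 + C (1611 : ℂ) * X 0 ^ 5 * X 1 ^ 2 + C ((420) + (8) * Complex.I) * X 0 ^ 6 * X 1 ^ 1 + C (12 : ℂ) * X 0 ^ 7 * X 1 ^ 0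

lemma P1G7hom : (P1G7).IsHomogeneous 7 := by
  unfold P1G7
  repeat' apply MvPolynomial.IsHomogeneous.add
  all_goals exact ((isHomogeneous_C _ _).mul ((isHomogeneous_X _ _).pow _)).mul ((isHomogeneous_X _ _).pow _)

lemma P1eq : shiftAt (-2 : ℂ) (1 : ℂ) f₇ = P1G2 + P1G3 + P1G4 + P1G5 + P1G6 + P1G7 := by
  apply MvPolynomial.funext
  intro x
  rw [eval_shiftAt]
  unfold f₇ P1G2 P1G3 P1G4 P1G5 P1G6 P1G7
  simp only [map_add, map_sub, map_mul, map_pow, map_neg, map_ofNat, map_one, eval_X, eval_C,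
    Matrix.cons_val_zero, Matrix.cons_val_one, Matrix.head_cons, Fin.isValue]
  ring

lemma P1ne : P1G2 ≠ 0 := by
  intro h
  have h2 := congrArg (eval ![(1 : ℂ), (0 : ℂ)]) h
  simp only [P1G2, map_add, map_mul, map_pow, eval_C, eval_X, map_ofNat, eval_zero,
    Matrix.cons_val_zero, Matrix.cons_val_one, Matrix.head_cons] at h2
  norm_num [Complex.ext_iff] at h2

noncomputable def P2G2 : MvPolynomial (Fin 2) ℂ :=
  C ((-640) + (1920) * Complex.I) * X 0 ^ 0 * X 1 ^ 2 + C ((640) + (-1920) * Complex.I) * X 0 ^ 1 * X 1 ^ 1 + C ((-160) + (480) * Complex.I) * X 0 ^ 2 * X 1 ^ 0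

lemma P2G2hom : (P2G2).IsHomogeneous 2 := by
  unfold P2G2
  repeat' apply MvPolynomial.IsHomogeneous.add
  all_goals exact ((isHomogeneous_C _ _).mul ((isHomogeneous_X _ _).pow _)).mul ((isHomogeneous_X _ _).pow _)

noncomputable def P2G3 : MvPolynomial (Fin 2) ℂ :=
  C ((-928) + (-3616) * Complex.I) * X 0 ^ 0 * X 1 ^ 3 + C ((8592) + (3024) * Complex.I) * X 0 ^ 1 * X 1 ^ 2 + C ((4704) + (-2112) * Complex.I) * X 0 ^ 2 * X 1 ^ 1 + C ((-4384) + (752) * Complex.I) * X 0 ^ 3 * X 1 ^ 0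

lemma P2G3hom : (P2G3).IsHomogeneous 3 := by
  unfold P2G3
  repeat' apply MvPolynomial.IsHomogeneous.add
  all_goals exact ((isHomogeneous_C _ _).mul ((isHomogeneous_X _ _).pow _)).mul ((isHomogeneous_X _ _).pow _)

noncomputable def P2G4 : MvPolynomial (Fin 2) ℂ :=
  C ((8198) + (-1330) * Complex.I) * X 0 ^ 0 * X 1 ^ 4 + C ((7168) + (-912) * Complex.I) * X 0 ^ 1 * X 1 ^ 3 + C ((22396) + (1428) * Complex.I) * X 0 ^ 2 * X 1 ^ 2 + C ((14704) + (-304) * Complex.I) * X 0 ^ 3 * X 1 ^ 1 + C ((-3250) + (414) * Complex.I) * X 0 ^ 4 * X 1 ^ 0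

lemma P2G4hom : (P2G4).IsHomogeneous 4 := by
  unfold P2G4
  repeat' apply MvPolynomial.IsHomogeneous.add
  all_goals exact ((isHomogeneous_C _ _).mul ((isHomogeneous_X _ _).pow _)).mul ((isHomogeneous_X _ _).pow _)

noncomputable def P2G5 : MvPolynomial (Fin 2) ℂ :=
  C ((2604) + (4074) * Complex.I) * X 0 ^ 0 * X 1 ^ 5 + C ((17227) + (-2160) * Complex.I) * X 0 ^ 1 * X 1 ^ 4 + C ((25444) + (2556) * Complex.I) * X 0 ^ 2 * X 1 ^ 3 + C ((26906) + (336) * Complex.I) * X 0 ^ 3 * X 1 ^ 2 + C ((12440) + (282) * Complex.I) * X 0 ^ 4 * X 1 ^ 1 + C ((-621) + (96) * Complex.I) * X 0 ^ 5 * X 1 ^ 0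

lemma P2G5hom : (P2G5).IsHomogeneous 5 := by
  unfold P2G5
  repeat' apply MvPolynomial.IsHomogeneous.add
  all_goals exact ((isHomogeneous_C _ _).mul ((isHomogeneous_X _ _).pow _)).mul ((isHomogeneous_X _ _).pow _)

noncomputable def P2G6 : MvPolynomial (Fin 2) ℂ :=
  C ((54) + (-374) * Complex.I) * X 0 ^ 0 * X 1 ^ 6 + C ((8742) + (3696) * Complex.I) * X 0 ^ 1 * X 1 ^ 5 + C ((16336) + (-540) * Complex.I) * X 0 ^ 2 * X 1 ^ 4 + C ((16884) + (1392) * Complex.I) * X 0 ^ 3 * X 1 ^ 3 + C ((11710) + (42) * Complex.I) * X 0 ^ 4 * X 1 ^ 2 + C ((3942) + (96) * Complex.I) * X 0 ^ 5 * X 1 ^ 1 + C ((28) + (8) * Complex.I) * X 0 ^ 6 * X 1 ^ 0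

lemma P2G6hom : (P2G6).IsHomogeneous 6 := by
  unfold P2G6
  repeat' apply MvPolynomial.IsHomogeneous.add
  all_goals exact ((isHomogeneous_C _ _).mul ((isHomogeneous_X _ _).pow _)).mul ((isHomogeneous_X _ _).pow _)

noncomputable def P2G7 : MvPolynomial (Fin 2) ℂ :=
  C ((720) + (-242) * Complex.I) * X 0 ^ 0 * X 1 ^ 7 + C (987 : ℂ) * X 0 ^ 1 * X 1 ^ 6 + C ((3360) + (924) * Complex.I) * X 0 ^ 2 * X 1 ^ 5 + C (4086 : ℂ) * X 0 ^ 3 * X 1 ^ 4 + C ((3060) + (174) * Complex.I) * X 0 ^ 4 * X 1 ^ 3 + C (1611 : ℂ) * X 0 ^ 5 * X 1 ^ 2 + C ((420) + (8) * Complex.I) * X 0 ^ 6 * X 1 ^ 1 + C (12 : ℂ) * X 0 ^ 7 * X 1 ^ 0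

lemma P2G7hom : (P2G7).IsHomogeneous 7 := by
  unfold P2G7
  repeat' apply MvPolynomial.IsHomogeneous.add
  all_goals exact ((isHomogeneous_C _ _).mul ((isHomogeneous_X _ _).pow _)).mul ((isHomogeneous_X _ _).pow _)

lemma P2eq : shiftAt (2 : ℂ) (1 : ℂ) f₇ = P2G2 + P2G3 + P2G4 + P2G5 + P2G6 + P2G7 := by
  apply MvPolynomial.funext
  intro x
  rw [eval_shiftAt]
  unfold f₇ P2G2 P2G3 P2G4 P2G5 P2G6 P2G7
  simp only [map_add, map_sub, map_mul, map_pow, map_neg, map_ofNat, map_one, eval_X, eval_C,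
    Matrix.cons_val_zero, Matrix.cons_val_one, Matrix.head_cons, Fin.isValue]
  ring

lemma P2ne : P2G2 ≠ 0 := by
  intro h
  have h2 := congrArg (eval ![(1 : ℂ), (0 : ℂ)]) h
  simp only [P2G2, map_add, map_mul, map_pow, eval_C, eval_X, map_ofNat, eval_zero,
    Matrix.cons_val_zero, Matrix.cons_val_one, Matrix.head_cons] at h2
  norm_num [Complex.ext_iff] at h2

noncomputable def P3G2 : MvPolynomial (Fin 2) ℂ :=
  C (-1600 : ℂ) * X 0 ^ 0 * X 1 ^ 2 + C (-6400 : ℂ) * X 0 ^ 1 * X 1 ^ 1 + C (-6400 : ℂ) * X 0 ^ 2 * X 1 ^ 0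

lemma P3G2hom : (P3G2).IsHomogeneous 2 := by
  unfold P3G2
  repeat' apply MvPolynomial.IsHomogeneous.add
  all_goals exact ((isHomogeneous_C _ _).mul ((isHomogeneous_X _ _).pow _)).mul ((isHomogeneous_X _ _).pow _)

noncomputable def P3G3 : MvPolynomial (Fin 2) ℂ :=
  C ((4672) + (-3136) * Complex.I) * X 0 ^ 0 * X 1 ^ 3 + C ((5952) + (-5376) * Complex.I) * X 0 ^ 1 * X 1 ^ 2 + C ((-3456) + (1728) * Complex.I) * X 0 ^ 2 * X 1 ^ 1 + C ((6656) + (-128) * Complex.I) * X 0 ^ 3 * X 1 ^ 0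

lemma P3G3hom : (P3G3).IsHomogeneous 3 := by
  unfold P3G3
  repeat' apply MvPolynomial.IsHomogeneous.add
  all_goals exact ((isHomogeneous_C _ _).mul ((isHomogeneous_X _ _).pow _)).mul ((isHomogeneous_X _ _).pow _)

noncomputable def P3G4 : MvPolynomial (Fin 2) ℂ :=
  C ((7904) + (-7280) * Complex.I) * X 0 ^ 0 * X 1 ^ 4 + C ((3584) + (-11616) * Complex.I) * X 0 ^ 1 * X 1 ^ 3 + C ((4768) + (4944) * Complex.I) * X 0 ^ 2 * X 1 ^ 2 + C ((12992) + (-1792) * Complex.I) * X 0 ^ 3 * X 1 ^ 1 + C ((-880) + (192) * Complex.I) * X 0 ^ 4 * X 1 ^ 0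

lemma P3G4hom : (P3G4).IsHomogeneous 4 := by
  unfold P3G4
  repeat' apply MvPolynomial.IsHomogeneous.add
  all_goals exact ((isHomogeneous_C _ _).mul ((isHomogeneous_X _ _).pow _)).mul ((isHomogeneous_X _ _).pow _)

noncomputable def P3G5 : MvPolynomial (Fin 2) ℂ :=
  C ((4296) + (-6024) * Complex.I) * X 0 ^ 0 * X 1 ^ 5 + C ((-12752) + (-8160) * Complex.I) * X 0 ^ 1 * X 1 ^ 4 + C ((-9424) + (6504) * Complex.I) * X 0 ^ 2 * X 1 ^ 3 + C ((-3616) + (-2256) * Complex.I) * X 0 ^ 3 * X 1 ^ 2 + C ((-5720) + (528) * Complex.I) * X 0 ^ 4 * X 1 ^ 1 + C ((-864) + (-96) * Complex.I) * X 0 ^ 5 * X 1 ^ 0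

lemma P3G5hom : (P3G5).IsHomogeneous 5 := by
  unfold P3G5
  repeat' apply MvPolynomial.IsHomogeneous.add
  all_goals exact ((isHomogeneous_C _ _).mul ((isHomogeneous_X _ _).pow _)).mul ((isHomogeneous_X _ _).pow _)

noncomputable def P3G6 : MvPolynomial (Fin 2) ℂ :=
  C ((2133) + (-2068) * Complex.I) * X 0 ^ 0 * X 1 ^ 6 + C ((-5496) + (-1848) * Complex.I) * X 0 ^ 1 * X 1 ^ 5 + C ((-3638) + (4080) * Complex.I) * X 0 ^ 2 * X 1 ^ 4 + C ((-3492) + (-696) * Complex.I) * X 0 ^ 3 * X 1 ^ 3 + C ((-3275) + (564) * Complex.I) * X 0 ^ 4 * X 1 ^ 2 + C ((-396) + (-48) * Complex.I) * X 0 ^ 5 * X 1 ^ 1 + C ((196) + (16) * Complex.I) * X 0 ^ 6 * X 1 ^ 0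

lemma P3G6hom : (P3G6).IsHomogeneous 6 := by
  unfold P3G6
  repeat' apply MvPolynomial.IsHomogeneous.add
  all_goals exact ((isHomogeneous_C _ _).mul ((isHomogeneous_X _ _).pow _)).mul ((isHomogeneous_X _ _).pow _)

noncomputable def P3G7 : MvPolynomial (Fin 2) ℂ :=
  C ((720) + (-242) * Complex.I) * X 0 ^ 0 * X 1 ^ 7 + C (987 : ℂ) * X 0 ^ 1 * X 1 ^ 6 + C ((3360) + (924) * Complex.I) * X 0 ^ 2 * X 1 ^ 5 + C (4086 : ℂ) * X 0 ^ 3 * X 1 ^ 4 + C ((3060) + (174) * Complex.I) * X 0 ^ 4 * X 1 ^ 3 + C (1611 : ℂ) * X 0 ^ 5 * X 1 ^ 2 + C ((420) + (8) * Complex.I) * X 0 ^ 6 * X 1 ^ 1 + C (12 : ℂ) * X 0 ^ 7 * X 1 ^ 0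

lemma P3G7hom : (P3G7).IsHomogeneous 7 := by
  unfold P3G7
  repeat' apply MvPolynomial.IsHomogeneous.add
  all_goals exact ((isHomogeneous_C _ _).mul ((isHomogeneous_X _ _).pow _)).mul ((isHomogeneous_X _ _).pow _)

lemma P3eq : shiftAt (-1 : ℂ) (2 : ℂ) f₇ = P3G2 + P3G3 + P3G4 + P3G5 + P3G6 + P3G7 := by
  apply MvPolynomial.funext
  intro x
  rw [eval_shiftAt]
  unfold f₇ P3G2 P3G3 P3G4 P3G5 P3G6 P3G7
  simp only [map_add, map_sub, map_mul, map_pow, map_neg, map_ofNat, map_one, eval_X, eval_C,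
    Matrix.cons_val_zero, Matrix.cons_val_one, Matrix.head_cons, Fin.isValue]
  ring

lemma P3ne : P3G2 ≠ 0 := by
  intro h
  have h2 := congrArg (eval ![(1 : ℂ), (0 : ℂ)]) h
  simp only [P3G2, map_add, map_mul, map_pow, eval_C, eval_X, map_ofNat, eval_zero,
    Matrix.cons_val_zero, Matrix.cons_val_one, Matrix.head_cons] at h2
  norm_num [Complex.ext_iff] at h2

noncomputable def P4G2 : MvPolynomial (Fin 2) ℂ :=
  C (-400 : ℂ) * X 0 ^ 0 * X 1 ^ 2 + C (1600 : ℂ) * X 0 ^ 1 * X 1 ^ 1 + C (-1600 : ℂ) * X 0 ^ 2 * X 1 ^ 0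

lemma P4G2hom : (P4G2).IsHomogeneous 2 := by
  unfold P4G2
  repeat' apply MvPolynomial.IsHomogeneous.add
  all_goals exact ((isHomogeneous_C _ _).mul ((isHomogeneous_X _ _).pow _)).mul ((isHomogeneous_X _ _).pow _)

noncomputable def P4G3 : MvPolynomial (Fin 2) ℂ :=
  C ((-4832) + (-3136) * Complex.I) * X 0 ^ 0 * X 1 ^ 3 + C ((5712) + (5376) * Complex.I) * X 0 ^ 1 * X 1 ^ 2 + C ((6336) + (1728) * Complex.I) * X 0 ^ 2 * X 1 ^ 1 + C ((3136) + (128) * Complex.I) * X 0 ^ 3 * X 1 ^ 0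

lemma P4G3hom : (P4G3).IsHomogeneous 3 := by
  unfold P4G3
  repeat' apply MvPolynomial.IsHomogeneous.add
  all_goals exact ((isHomogeneous_C _ _).mul ((isHomogeneous_X _ _).pow _)).mul ((isHomogeneous_X _ _).pow _)

noncomputable def P4G4 : MvPolynomial (Fin 2) ℂ :=
  C ((536) + (-7280) * Complex.I) * X 0 ^ 0 * X 1 ^ 4 + C ((21904) + (11616) * Complex.I) * X 0 ^ 1 * X 1 ^ 3 + C ((33352) + (4944) * Complex.I) * X 0 ^ 2 * X 1 ^ 2 + C ((18592) + (1792) * Complex.I) * X 0 ^ 3 * X 1 ^ 1 + C ((5600) + (192) * Complex.I) * X 0 ^ 4 * X 1 ^ 0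

lemma P4G4hom : (P4G4).IsHomogeneous 4 := by
  unfold P4G4
  repeat' apply MvPolynomial.IsHomogeneous.add
  all_goals exact ((isHomogeneous_C _ _).mul ((isHomogeneous_X _ _).pow _)).mul ((isHomogeneous_X _ _).pow _)

noncomputable def P4G5 : MvPolynomial (Fin 2) ℂ :=
  C ((6744) + (-6024) * Complex.I) * X 0 ^ 0 * X 1 ^ 5 + C ((21728) + (8160) * Complex.I) * X 0 ^ 1 * X 1 ^ 4 + C ((43064) + (6504) * Complex.I) * X 0 ^ 2 * X 1 ^ 3 + C ((34624) + (2256) * Complex.I) * X 0 ^ 3 * X 1 ^ 2 + C ((15520) + (528) * Complex.I) * X 0 ^ 4 * X 1 ^ 1 + C ((2496) + (96) * Complex.I) * X 0 ^ 5 * X 1 ^ 0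

lemma P4G5hom : (P4G5).IsHomogeneous 5 := by
  unfold P4G5
  repeat' apply MvPolynomial.IsHomogeneous.add
  all_goals exact ((isHomogeneous_C _ _).mul ((isHomogeneous_X _ _).pow _)).mul ((isHomogeneous_X _ _).pow _)

noncomputable def P4G6 : MvPolynomial (Fin 2) ℂ :=
  C ((4107) + (-2068) * Complex.I) * X 0 ^ 0 * X 1 ^ 6 + C ((7944) + (1848) * Complex.I) * X 0 ^ 1 * X 1 ^ 5 + C ((20878) + (4080) * Complex.I) * X 0 ^ 2 * X 1 ^ 4 + C ((20988) + (696) * Complex.I) * X 0 ^ 3 * X 1 ^ 3 + C ((12835) + (564) * Complex.I) * X 0 ^ 4 * X 1 ^ 2 + C ((4644) + (48) * Complex.I) * X 0 ^ 5 * X 1 ^ 1 + C ((364) + (16) * Complex.I) * X 0 ^ 6 * X 1 ^ 0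

lemma P4G6hom : (P4G6).IsHomogeneous 6 := by
  unfold P4G6
  repeat' apply MvPolynomial.IsHomogeneous.add
  all_goals exact ((isHomogeneous_C _ _).mul ((isHomogeneous_X _ _).pow _)).mul ((isHomogeneous_X _ _).pow _)

noncomputable def P4G7 : MvPolynomial (Fin 2) ℂ :=
  C ((720) + (-242) * Complex.I) * X 0 ^ 0 * X 1 ^ 7 + C (987 : ℂ) * X 0 ^ 1 * X 1 ^ 6 + C ((3360) + (924) * Complex.I) * X 0 ^ 2 * X 1 ^ 5 + C (4086 : ℂ) * X 0 ^ 3 * X 1 ^ 4 + C ((3060) + (174) * Complex.I) * X 0 ^ 4 * X 1 ^ 3 + C (1611 : ℂ) * X 0 ^ 5 * X 1 ^ 2 + C ((420) + (8) * Complex.I) * X 0 ^ 6 * X 1 ^ 1 + C (12 : ℂ) * X 0 ^ 7 * X 1 ^ 0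

lemma P4G7hom : (P4G7).IsHomogeneous 7 := by
  unfold P4G7
  repeat' apply MvPolynomial.IsHomogeneous.add
  all_goals exact ((isHomogeneous_C _ _).mul ((isHomogeneous_X _ _).pow _)).mul ((isHomogeneous_X _ _).pow _)

lemma P4eq : shiftAt (1 : ℂ) (2 : ℂ) f₇ = P4G2 + P4G3 + P4G4 + P4G5 + P4G6 + P4G7 := by
  apply MvPolynomial.funext
  intro x
  rw [eval_shiftAt]
  unfold f₇ P4G2 P4G3 P4G4 P4G5 P4G6 P4G7
  simp only [map_add, map_sub, map_mul, map_pow, map_neg, map_ofNat, map_one, eval_X, eval_C,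
    Matrix.cons_val_zero, Matrix.cons_val_one, Matrix.head_cons, Fin.isValue]
  ring

lemma P4ne : P4G2 ≠ 0 := by
  intro h
  have h2 := congrArg (eval ![(1 : ℂ), (0 : ℂ)]) h
  simp only [P4G2, map_add, map_mul, map_pow, eval_C, eval_X, map_ofNat, eval_zero,
    Matrix.cons_val_zero, Matrix.cons_val_one, Matrix.head_cons] at h2
  norm_num [Complex.ext_iff] at h2

/-- C₇ has multiplicity exactly 3 at p₀ = [0:0:1] and p₅ = [3:2i:1], and
multiplicity exactly 2 at p₁ = [-2:1:1], p₂ = [2:1:1], p₃ = [-1:2:1], p₄ = [1:2:1]. -/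
theorem stmt17 :
    multIs (shiftAt 0 0 f₇) 3 ∧
    multIs (shiftAt 3 (2 * Complex.I) f₇) 3 ∧
    multIs (shiftAt (-2) 1 f₇) 2 ∧
    multIs (shiftAt 2 1 f₇) 2 ∧
    multIs (shiftAt (-1) 2 f₇) 2 ∧
    multIs (shiftAt 1 2 f₇) 2 := by
  refine ⟨?_, ?_, ?_, ?_, ?_, ?_⟩ <;> unfold multIs
  ·
    refine ⟨?_, ?_⟩
    · intro k hk
      rw [P0eq]
      simp only [map_add]
      rw [homogeneousComponent_of_mem ((mem_homogeneousSubmodule _ _).2 P0G3hom), homogeneousComponent_of_mem ((mem_homogeneousSubmodule _ _).2 P0G4hom), homogeneousComponent_of_mem ((mem_homogeneousSubmodule _ _).2 P0G5hom), homogeneousComponent_of_mem ((mem_homogeneousSubmodule _ _).2 P0G6hom), homogeneousComponent_of_mem ((mem_homogeneousSubmodule _ _).2 P0G7hom)]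
      interval_cases k <;> norm_num
    · rw [P0eq]
      simp only [map_add]
      rw [homogeneousComponent_of_mem ((mem_homogeneousSubmodule _ _).2 P0G3hom), homogeneousComponent_of_mem ((mem_homogeneousSubmodule _ _).2 P0G4hom), homogeneousComponent_of_mem ((mem_homogeneousSubmodule _ _).2 P0G5hom), homogeneousComponent_of_mem ((mem_homogeneousSubmodule _ _).2 P0G6hom), homogeneousComponent_of_mem ((mem_homogeneousSubmodule _ _).2 P0G7hom)]
      norm_num
      exact P0ne
  ·
    refine ⟨?_, ?_⟩
    · intro k hk
      rw [P5eq]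
      simp only [map_add]
      rw [homogeneousComponent_of_mem ((mem_homogeneousSubmodule _ _).2 P5G3hom), homogeneousComponent_of_mem ((mem_homogeneousSubmodule _ _).2 P5G4hom), homogeneousComponent_of_mem ((mem_homogeneousSubmodule _ _).2 P5G5hom), homogeneousComponent_of_mem ((mem_homogeneousSubmodule _ _).2 P5G6hom), homogeneousComponent_of_mem ((mem_homogeneousSubmodule _ _).2 P5G7hom)]
      interval_cases k <;> norm_num
    · rw [P5eq]
      simp only [map_add]
      rw [homogeneousComponent_of_mem ((mem_homogeneousSubmodule _ _).2 P5G3hom), homogeneousComponent_of_mem ((mem_homogeneousSubmodule _ _).2 P5G4hom), homogeneousComponent_of_mem ((mem_homogeneousSubmodule _ _).2 P5G5hom), homogeneousComponent_of_mem ((mem_homogeneousSubmodule _ _).2 P5G6hom), homogeneousComponent_of_mem ((mem_homogeneousSubmodule _ _).2 P5G7hom)]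
      norm_num
      exact P5ne
  ·
    refine ⟨?_, ?_⟩
    · intro k hk
      rw [P1eq]
      simp only [map_add]
      rw [homogeneousComponent_of_mem ((mem_homogeneousSubmodule _ _).2 P1G2hom), homogeneousComponent_of_mem ((mem_homogeneousSubmodule _ _).2 P1G3hom), homogeneousComponent_of_mem ((mem_homogeneousSubmodule _ _).2 P1G4hom), homogeneousComponent_of_mem ((mem_homogeneousSubmodule _ _).2 P1G5hom), homogeneousComponent_of_mem ((mem_homogeneousSubmodule _ _).2 P1G6hom), homogeneousComponent_of_mem ((mem_homogeneousSubmodule _ _).2 P1G7hom)]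
      interval_cases k <;> norm_num
    · rw [P1eq]
      simp only [map_add]
      rw [homogeneousComponent_of_mem ((mem_homogeneousSubmodule _ _).2 P1G2hom), homogeneousComponent_of_mem ((mem_homogeneousSubmodule _ _).2 P1G3hom), homogeneousComponent_of_mem ((mem_homogeneousSubmodule _ _).2 P1G4hom), homogeneousComponent_of_mem ((mem_homogeneousSubmodule _ _).2 P1G5hom), homogeneousComponent_of_mem ((mem_homogeneousSubmodule _ _).2 P1G6hom), homogeneousComponent_of_mem ((mem_homogeneousSubmodule _ _).2 P1G7hom)]
      norm_num
      exact P1ne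
  ·
    refine ⟨?_, ?_⟩
    · intro k hk
      rw [P2eq]
      simp only [map_add]
      rw [homogeneousComponent_of_mem ((mem_homogeneousSubmodule _ _).2 P2G2hom), homogeneousComponent_of_mem ((mem_homogeneousSubmodule _ _).2 P2G3hom), homogeneousComponent_of_mem ((mem_homogeneousSubmodule _ _).2 P2G4hom), homogeneousComponent_of_mem ((mem_homogeneousSubmodule _ _).2 P2G5hom), homogeneousComponent_of_mem ((mem_homogeneousSubmodule _ _).2 P2G6hom), homogeneousComponent_of_mem ((mem_homogeneousSubmodule _ _).2 P2G7hom)]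
      interval_cases k <;> norm_num
    · rw [P2eq]
      simp only [map_add]
      rw [homogeneousComponent_of_mem ((mem_homogeneousSubmodule _ _).2 P2G2hom), homogeneousComponent_of_mem ((mem_homogeneousSubmodule _ _).2 P2G3hom), homogeneousComponent_of_mem ((mem_homogeneousSubmodule _ _).2 P2G4hom), homogeneousComponent_of_mem ((mem_homogeneousSubmodule _ _).2 P2G5hom), homogeneousComponent_of_mem ((mem_homogeneousSubmodule _ _).2 P2G6hom), homogeneousComponent_of_mem ((mem_homogeneousSubmodule _ _).2 P2G7hom)]
      norm_num
      exact P2ne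
  ·
    refine ⟨?_, ?_⟩
    · intro k hk
      rw [P3eq]
      simp only [map_add]
      rw [homogeneousComponent_of_mem ((mem_homogeneousSubmodule _ _).2 P3G2hom), homogeneousComponent_of_mem ((mem_homogeneousSubmodule _ _).2 P3G3hom), homogeneousComponent_of_mem ((mem_homogeneousSubmodule _ _).2 P3G4hom), homogeneousComponent_of_mem ((mem_homogeneousSubmodule _ _).2 P3G5hom), homogeneousComponent_of_mem ((mem_homogeneousSubmodule _ _).2 P3G6hom), homogeneousComponent_of_mem ((mem_homogeneousSubmodule _ _).2 P3G7hom)]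
      interval_cases k <;> norm_num
    · rw [P3eq]
      simp only [map_add]
      rw [homogeneousComponent_of_mem ((mem_homogeneousSubmodule _ _).2 P3G2hom), homogeneousComponent_of_mem ((mem_homogeneousSubmodule _ _).2 P3G3hom), homogeneousComponent_of_mem ((mem_homogeneousSubmodule _ _).2 P3G4hom), homogeneousComponent_of_mem ((mem_homogeneousSubmodule _ _).2 P3G5hom), homogeneousComponent_of_mem ((mem_homogeneousSubmodule _ _).2 P3G6hom), homogeneousComponent_of_mem ((mem_homogeneousSubmodule _ _).2 P3G7hom)]
      norm_num
      exact P3ne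
  ·
    refine ⟨?_, ?_⟩
    · intro k hk
      rw [P4eq]
      simp only [map_add]
      rw [homogeneousComponent_of_mem ((mem_homogeneousSubmodule _ _).2 P4G2hom), homogeneousComponent_of_mem ((mem_homogeneousSubmodule _ _).2 P4G3hom), homogeneousComponent_of_mem ((mem_homogeneousSubmodule _ _).2 P4G4hom), homogeneousComponent_of_mem ((mem_homogeneousSubmodule _ _).2 P4G5hom), homogeneousComponent_of_mem ((mem_homogeneousSubmodule _ _).2 P4G6hom), homogeneousComponent_of_mem ((mem_homogeneousSubmodule _ _).2 P4G7hom)]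
      interval_cases k <;> norm_num
    · rw [P4eq]
      simp only [map_add]
      rw [homogeneousComponent_of_mem ((mem_homogeneousSubmodule _ _).2 P4G2hom), homogeneousComponent_of_mem ((mem_homogeneousSubmodule _ _).2 P4G3hom), homogeneousComponent_of_mem ((mem_homogeneousSubmodule _ _).2 P4G4hom), homogeneousComponent_of_mem ((mem_homogeneousSubmodule _ _).2 P4G5hom), homogeneousComponent_of_mem ((mem_homogeneousSubmodule _ _).2 P4G6hom), homogeneousComponent_of_mem ((mem_homogeneousSubmodule _ _).2 P4G7hom)]
      norm_num
      exact P4ne
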